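/- Let K be the rank two tropical cone in (T₂ ∪ {∞})^d generated by V = (v^(1), …, v^(n)). For a bipartite graph T on [d] ⊔ [n], let K_T be the rank two tropical cone generated by V_T, where (v^(j)_T)_i = v^(j)_i if (i,j) ∈ T and ∞ otherwise, and write π_{u*} and π_{t*} for the coordinatewise projections (a,b) ↦ a and (a,b) ↦ b (sending ∞ to ∞), so that π_{u*}(K) and π_{t*}(K_T) are rank one tropical cones in (T ∪ {∞})^d generated by π_{u*}(V) and π_{t*}(V_T), with covector cells A_T ⊆ ℝ_t^d and B_S ⊆ ℝ_u^d which are ordinary convex polyhedra. Then, under the identification (ℝ²)^d ≅ ℝ_t^d × ℝ_u^d = ℝ^{2d}, the intersection K ∩ (T₂)^d is the finite disjoint union K ∩ (T₂)^d = ⊔_S ⊔_{T ⊇ S} ( int(A_T) + int(B_S) ), where S runs over the bounded covectors of V and, for each such S, T runs over the covectors of π_{u*}(V) containing S; each piece int(A_T) + int(B_S) equals the interior of the ordinary polyhedron A_T + B_S. -/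

import Mathlib

noncomputable section
open scoped Classical

/-- The rank two tropical semifield `T₂`: `ℝ²` with the lexicographic order. -/
abbrev T2 := Lex (ℝ × ℝ)

/-- `T₂ ∪ {∞}`. -/
abbrev T2i := WithTop T2

variable {d n : ℕ}

/-- The tropical linear combination `min_j (λ_j + v^(j))` of generators. -/
def tropCombN (v : Fin n → Fin d → T2i) (lam : Fin n → T2i) : Fin d → T2i :=
  fun i => Finset.univ.inf fun j => lam j + v j i

/-- The rank two tropical cone generated by `v^(1), …, v^(n)`. -/
def genCone (v : Fin n → Fin d → T2i) : Set (Fin d → T2i) :=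
  {x | ∃ lam : Fin n → T2i, x = tropCombN v lam}

/-- The `i`-th sector of `u`:
`Z_i(u) = ⋂_{k, u_k ≠ ∞} {p : p_k − p_i ≤_lex u_k − u_i}`. -/
def sector (u : Fin d → T2i) (i : Fin d) : Set (Fin d → T2) :=
  {p | ∀ k, (↑(p k - p i) + u i : T2i) ≤ u k}

/-- The covector `S_p` of `p` w.r.t. generators `v`: the bipartite graph on
`[d] ⊔ [n]` with `(i,j) ∈ S_p` iff `v^(j)_i ≠ ∞` and `p ∈ Z_i(v^(j))`. -/
def covector (v : Fin n → Fin d → T2i) (p : Fin d → T2) : Set (Fin d × Fin n) :=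
  {ij | v ij.2 ij.1 ≠ ⊤ ∧ p ∈ sector (v ij.2) ij.1}

/-- The covector cell `C_S = {p : S ⊆ S_p}`. -/
def cellC (v : Fin n → Fin d → T2i) (S : Set (Fin d × Fin n)) : Set (Fin d → T2) :=
  {p | S ⊆ covector v p}

/-- `S` is a covector w.r.t. `v`. -/
def IsCovector (v : Fin n → Fin d → T2i) (S : Set (Fin d × Fin n)) : Prop :=
  ∃ p : Fin d → T2, S = covector v p

/-- A bipartite graph on `[d] ⊔ [n]` is bounded if no node of `[d]` is isolated. -/
def BoundedGraph (S : Set (Fin d × Fin n)) : Prop := ∀ i, ∃ j, (i, j) ∈ S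

/-- No node of `[n]` is isolated. -/
def NoIsolatedGen (S : Set (Fin d × Fin n)) : Prop := ∀ j, ∃ i, (i, j) ∈ S

-- faces of covector cells
def faceC (v : Fin n → Fin d → T2i) (S : Set (Fin d × Fin n))
    (E : Set (Fin d × Fin n × Fin d)) : Set (Fin d → T2) :=
  cellC v S ∩ {p | ∀ e ∈ E, (↑(p e.2.2 - p e.1) + v e.2.1 e.1 : T2i) = v e.2.1 e.2.2}

def IsFaceC (v : Fin n → Fin d → T2i) (S : Set (Fin d × Fin n))
    (F : Set (Fin d → T2)) : Prop :=
  ∃ E : Set (Fin d × Fin n × Fin d),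
    (∀ e ∈ E, (e.1, e.2.1) ∈ S ∧ v e.2.1 e.2.2 ≠ ⊤) ∧ F = faceC v S E

def relintC (v : Fin n → Fin d → T2i) (S : Set (Fin d × Fin n)) : Set (Fin d → T2) :=
  {p | p ∈ cellC v S ∧ ∀ F, IsFaceC v S F → F ≠ cellC v S → p ∉ F}

/-- The pairing `⟨s,p⟩ = ∑ i, s i • p i` between `ℤ^d` and `(T₂)^d`. -/
def pairE (s : Fin d → ℤ) (p : Fin d → T2) : T2 := ∑ i, s i • p i

/-- A lex-polyhedron in `(T₂)^d`. -/
def IsLexPolyE (P : Set (Fin d → T2)) : Prop :=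
  ∃ (k : ℕ) (s : Fin k → Fin d → ℤ) (q : Fin k → T2),
    P = {p | ∀ i, pairE (s i) p ≤ q i}

-- rank one versions
def sector1 (u : Fin d → WithTop ℝ) (i : Fin d) : Set (Fin d → ℝ) :=
  {p | ∀ k, (↑(p k - p i) + u i : WithTop ℝ) ≤ u k}

def covector1 (v : Fin n → Fin d → WithTop ℝ) (p : Fin d → ℝ) :
    Set (Fin d × Fin n) :=
  {ij | v ij.2 ij.1 ≠ ⊤ ∧ p ∈ sector1 (v ij.2) ij.1}

def cell1C (v : Fin n → Fin d → WithTop ℝ) (S : Set (Fin d × Fin n)) :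
    Set (Fin d → ℝ) :=
  {p | S ⊆ covector1 v p}

def IsCovector1 (v : Fin n → Fin d → WithTop ℝ) (S : Set (Fin d × Fin n)) : Prop :=
  ∃ p : Fin d → ℝ, S = covector1 v p

/-- Projection `π_{u*}` onto first coordinates (sending `∞` to `∞`). -/
def projU2 (x : T2i) : WithTop ℝ := WithTop.map (fun a => (ofLex a).1) x

/-- Projection `π_{t*}` onto second coordinates (sending `∞` to `∞`). -/
def projT2 (x : T2i) : WithTop ℝ := WithTop.map (fun a => (ofLex a).2) x

def genU (v : Fin n → Fin d → T2i) : Fin n → Fin d → WithTop ℝ :=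
  fun j i => projU2 (v j i)

/-- The generators `V_T` of `K_T`. -/
def genRestrict (v : Fin n → Fin d → T2i) (T : Set (Fin d × Fin n)) :
    Fin n → Fin d → T2i :=
  fun j i => if (i, j) ∈ T then v j i else ⊤

def genTB (v : Fin n → Fin d → T2i) (T : Set (Fin d × Fin n)) :
    Fin n → Fin d → WithTop ℝ :=
  fun j i => projT2 (genRestrict v T j i)

/-- The identification `(ℝ²)^d ≅ ℝ_t^d × ℝ_u^d = ℝ^{2d}`. -/
def embed2 (p : Fin d → T2) : (Fin d → ℝ) × (Fin d → ℝ) :=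
  (fun i => (ofLex (p i)).1, fun i => (ofLex (p i)).2)

/-- The finite part of the tropical cone generated by `v`, as a subset of `(T₂)^d`. -/
def genConeFin (v : Fin n → Fin d → T2i) : Set (Fin d → T2) :=
  {p | (fun i => (↑(p i) : T2i)) ∈ genCone v}

/-- The summand `int(A_T) + int(B_S) ⊆ ℝ_t^d × ℝ_u^d = ℝ^{2d}`, where `A_T` is the
rank one covector cell of `π_{u*}(V)` labelled `T` and `B_S` the rank one covector
cell of `π_{t*}(V_T)` labelled `S`. -/
def conePiece (v : Fin n → Fin d → T2i) (S T : Set (Fin d × Fin n)) :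
    Set ((Fin d → ℝ) × (Fin d → ℝ)) :=
  {x | x.1 ∈ intrinsicInterior ℝ (cell1C (genU v) T) ∧
       x.2 ∈ intrinsicInterior ℝ (cell1C (genTB v T) S)}

/-- The ordinary polyhedron `A_T + B_S ⊆ ℝ^{2d}` (orthogonal Minkowski sum). -/
def coneBlock (v : Fin n → Fin d → T2i) (S T : Set (Fin d × Fin n)) :
    Set ((Fin d → ℝ) × (Fin d → ℝ)) :=
  {x | x.1 ∈ cell1C (genU v) T ∧ x.2 ∈ cell1C (genTB v T) S}

/-- The index condition: `S` is a bounded covector of `V`, and `T ⊇ S` is a covector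
of `π_{u*}(V)`. -/
def coneIdx (v : Fin n → Fin d → T2i) (S T : Set (Fin d × Fin n)) : Prop :=
  IsCovector v S ∧ BoundedGraph S ∧ IsCovector1 (genU v) T ∧ S ⊆ T




section Gen
variable {G : Type*} [AddCommGroup G] [LinearOrder G] [IsOrderedAddMonoid G] {d n : ℕ}

lemma rearr1 {e pi f pk : G} (h : e - pi ≤ f - pk) : pk - pi + e ≤ f := by
  have h2 : e + pk ≤ f + pi := by
    calc e + pk = e - pi + (pi + pk) := by abel
      _ ≤ f - pk + (pi + pk) := add_le_add_left h _
      _ = f + pi := by abel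
  calc pk - pi + e = (e + pk) - pi := by abel
    _ ≤ (f + pi) - pi := sub_le_sub_right h2 _
    _ = f := by abel

lemma rearr2 {e pi f pk : G} (h : pk - pi + e ≤ f) : e - pi ≤ f - pk := by
  have h2 : e + pk ≤ f + pi := by
    calc e + pk = (pk - pi + e) + pi := by abel
      _ ≤ f + pi := add_le_add_left h _
  calc e - pi = (e + pk) - (pi + pk) := by abel
    _ ≤ (f + pi) - (pi + pk) := sub_le_sub_right h2 _
    _ = f - pk := by abel

def covG (w : Fin n → Fin d → WithTop G) (p : Fin d → G) : Set (Fin d × Fin n) :=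
  {ij | w ij.2 ij.1 ≠ ⊤ ∧ ∀ k, (↑(p k - p ij.1) + w ij.2 ij.1 : WithTop G) ≤ w ij.2 k}

lemma mem_covG {w : Fin n → Fin d → WithTop G} {p : Fin d → G} {i : Fin d} {j : Fin n} :
    (i,j) ∈ covG w p ↔ w j i ≠ ⊤ ∧ ∀ k, (↑(p k - p i) + w j i : WithTop G) ≤ w j k := Iff.rfl

lemma covG_exists_col (w : Fin n → Fin d → WithTop G) (p : Fin d → G) {j : Fin n} {k : Fin d}
    (h : w j k ≠ ⊤) : ∃ i, (i, j) ∈ covG w p := by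
  obtain ⟨c, hc⟩ := WithTop.ne_top_iff_exists.mp h
  have hne : (Finset.univ : Finset (Fin d)).Nonempty := ⟨k, Finset.mem_univ k⟩
  obtain ⟨i, -, hi⟩ := Finset.exists_mem_eq_inf Finset.univ hne (fun i => w j i + ↑(-(p i)))
  have hle : ∀ k', w j i + ↑(-(p i)) ≤ w j k' + ↑(-(p k')) := by
    intro k'; rw [← hi]; exact Finset.inf_le (Finset.mem_univ k')
  have hfin : w j i ≠ ⊤ := by
    intro htop
    have := hle k
    rw [htop, ← hc] at this
    simp [← WithTop.coe_add] at this
  obtain ⟨e, he⟩ := WithTop.ne_top_iff_exists.mp hfin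
  refine ⟨i, hfin, fun k' => ?_⟩
  cases hk' : w j k' with
  | top => exact le_top
  | coe f =>
    have := hle k'
    rw [← he, hk', ← WithTop.coe_add, ← WithTop.coe_add, WithTop.coe_le_coe] at this
    rw [← he, ← WithTop.coe_add, WithTop.coe_le_coe]
    have h2 : e - p i ≤ f - p k' := by
      calc e - p i = e + -(p i) := by abel
        _ ≤ f + -(p k') := this
        _ = f - p k' := by abel
    exact rearr1 h2

lemma covG_iff_comb (w : Fin n → Fin d → WithTop G) (p : Fin d → G) :
    (∀ i, ∃ j, (i,j) ∈ covG w p) ↔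
      ∃ lam : Fin n → WithTop G, ∀ i, (↑(p i) : WithTop G) = Finset.univ.inf (fun j => lam j + w j i) := by
  constructor
  · intro hb
    set m : Fin n → WithTop G := fun j => Finset.univ.inf (fun i => w j i + ↑(-(p i))) with hm
    refine ⟨fun j => WithTop.map (fun x => -x) (m j), fun i => ?_⟩
    apply le_antisymm
    · -- p i ≤ inf
      apply Finset.le_inf
      intro j _
      cases hmj : m j with
      | top =>
        simp [hmj]
      | coe mv =>
        have hle : (↑mv : WithTop G) ≤ w j i + ↑(-(p i)) := by
          rw [← hmj]; exact Finset.inf_le (Finset.mem_univ i)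
        cases hwi : w j i with
        | top => simp [hmj, hwi]
        | coe e =>
          rw [hwi, ← WithTop.coe_add, WithTop.coe_le_coe] at hle
          simp only [hmj, hwi, WithTop.map_coe, ← WithTop.coe_add, WithTop.coe_le_coe]
          have : p i ≤ -mv + e := by
            have h3 : mv + p i ≤ e := by
              calc mv + p i ≤ (e + -(p i)) + p i := add_le_add_left hle _
                _ = e := by abel
            calc p i = -mv + (mv + p i) := by abel
              _ ≤ -mv + e := add_le_add_right h3 _
          exact this
    · -- inf ≤ p i : pick j from covG
      obtain ⟨j, hji⟩ := hb i
      obtain ⟨e, he⟩ := WithTop.ne_top_iff_exists.mp hji.1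
      have hmje : m j = ↑(e - p i) := by
        apply le_antisymm
        · have : w j i + ↑(-(p i)) = ↑(e - p i) := by
            rw [← he, ← WithTop.coe_add]; congr 1; abel
          rw [← this]; exact Finset.inf_le (Finset.mem_univ i)
        · apply Finset.le_inf
          intro k _
          cases hwk : w j k with
          | top => exact le_top
          | coe f =>
            have := hji.2 k
            rw [← he, hwk, ← WithTop.coe_add, WithTop.coe_le_coe] at this
            rw [← WithTop.coe_add, WithTop.coe_le_coe]
            have := rearr2 this
            calc e - p i ≤ f - p k := this
              _ = f + -(p k) := by abel
        
      calc Finset.univ.inf (fun j' => WithTop.map (fun x => -x) (m j') + w j' i)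
          ≤ WithTop.map (fun x => -x) (m j) + w j i := Finset.inf_le (Finset.mem_univ j)
        _ = ↑(p i) := by
            rw [hmje, ← he]
            simp only [WithTop.map_coe, ← WithTop.coe_add, WithTop.coe_le_coe]
            congr 1; abel
  · rintro ⟨lam, hlam⟩ i
    have hne : (Finset.univ : Finset (Fin n)).Nonempty := by
      by_contra hemp
      rw [Finset.not_nonempty_iff_eq_empty] at hemp
      have := hlam i
      rw [hemp] at this
      simp at this
    obtain ⟨j, -, hj⟩ := Finset.exists_mem_eq_inf Finset.univ hne (fun j => lam j + w j i)
    have hji : (↑(p i) : WithTop G) = lam j + w j i := by rw [hlam i, hj]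
    have hlfin : lam j ≠ ⊤ := by intro h; rw [h] at hji; simp at hji
    have hwfin : w j i ≠ ⊤ := by intro h; rw [h] at hji; simp at hji
    obtain ⟨l, hl⟩ := WithTop.ne_top_iff_exists.mp hlfin
    obtain ⟨e, he⟩ := WithTop.ne_top_iff_exists.mp hwfin
    have hpi : p i = l + e := by
      rw [← hl, ← he, ← WithTop.coe_add, WithTop.coe_eq_coe] at hji; exact hji
    refine ⟨j, hwfin, fun k => ?_⟩
    have hk : (↑(p k) : WithTop G) ≤ lam j + w j k := by
      rw [hlam k]; exact Finset.inf_le (Finset.mem_univ j)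
    cases hwk : w j k with
    | top => exact le_top
    | coe f =>
      rw [hwk, ← hl, ← WithTop.coe_add, WithTop.coe_le_coe] at hk
      rw [← he, ← WithTop.coe_add, WithTop.coe_le_coe]
      have : p k - p i + e = p k - l := by rw [hpi]; abel
      rw [this]
      calc p k - l ≤ (l + f) - l := sub_le_sub_right hk _
        _ = f := by abel

end Gen



theorem lemL {E : Type*} [NormedAddCommGroup E] [NormedSpace ℝ E] (s U : Set E)
    (hUo : IsOpen U) (hspan : ∀ x ∈ affineSpan ℝ s, x ∈ U → x ∈ s)
    (hne : (s ∩ U).Nonempty)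
    (hseg : ∀ q ∈ s ∩ U, ∀ y ∈ s, openSegment ℝ q y ⊆ s ∩ U) :
    intrinsicInterior ℝ s = s ∩ U := by
  apply le_antisymm
  · -- ⊆
    intro x hx
    rw [mem_intrinsicInterior] at hx
    obtain ⟨y, hy, rfl⟩ := hx
    obtain ⟨ε, hε, hball⟩ := Metric.mem_nhds_iff.mp (mem_interior_iff_mem_nhds.mp hy)
    obtain ⟨q, hq⟩ := hne
    by_cases hxq : (y : E) = q
    · rw [hxq]; exact hq
    · have hdq : (0:ℝ) < dist (y:E) q := dist_pos.mpr hxq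
      set δ : ℝ := ε / (2 * dist (y:E) q) with hδ
      have hδpos : 0 < δ := div_pos hε (by positivity)
      set z : E := δ • ((y:E) - q) + (y:E) with hz
      have hzspan : z ∈ affineSpan ℝ s := by
        have h1 : (y:E) ∈ affineSpan ℝ s := y.2
        have h2 : q ∈ affineSpan ℝ s := subset_affineSpan ℝ s hq.1
        have := (affineSpan ℝ s).smul_vsub_vadd_mem' δ h1 h2 h1
        simpa [vsub_eq_sub, vadd_eq_add] using this
      have hzball : (⟨z, hzspan⟩ : affineSpan ℝ s) ∈ Metric.ball y ε := by
        rw [Metric.mem_ball, Subtype.dist_eq]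
        have : dist z (y:E) = δ * dist (y:E) q := by
          rw [dist_eq_norm]
          have : z - (y:E) = δ • ((y:E) - q) := by rw [hz]; abel
          rw [this, norm_smul, Real.norm_eq_abs, abs_of_pos hδpos, ← dist_eq_norm]
        rw [this, hδ]
        have : ε / (2 * dist (y:E) q) * dist (y:E) q = ε / 2 := by
          field_simp
        rw [this]; linarith
      have hzs : z ∈ s := hball hzball
      have hyseg : (y : E) ∈ openSegment ℝ q z := by
        refine ⟨δ / (1 + δ), 1 / (1 + δ), by positivity, by positivity, by field_simp; ring, ?_⟩
        rw [hz]
        match_scalars <;> (field_simp; try ring)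
      exact hseg q hq z hzs hyseg
  · -- ⊇
    intro x hx
    rw [mem_intrinsicInterior]
    refine ⟨⟨x, subset_affineSpan ℝ s hx.1⟩, ?_, rfl⟩
    apply interior_maximal (t := Subtype.val ⁻¹' U)
    · intro z hz
      exact hspan z.1 z.2 hz
    · exact hUo.preimage continuous_subtype_val
    · exact hx.2

-- CHUNK 3 : rank-1 relint machinery
variable {d n : ℕ}

lemma mem_covector1 {w : Fin n → Fin d → WithTop ℝ} {t : Fin d → ℝ} {i : Fin d} {j : Fin n} :
    (i,j) ∈ covector1 w t ↔ w j i ≠ ⊤ ∧ ∀ k, (↑(t k - t i) + w j i : WithTop ℝ) ≤ w j k :=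
  Iff.rfl

lemma covector1_eq_covG (w : Fin n → Fin d → WithTop ℝ) (t : Fin d → ℝ) :
    covector1 w t = covG w t := rfl

def Uset (w : Fin n → Fin d → WithTop ℝ) (S : Set (Fin d × Fin n)) : Set (Fin d → ℝ) :=
  {t | ∀ i j k, (i,j) ∈ S → (k,j) ∉ S → (↑(t k - t i) + w j i : WithTop ℝ) < w j k}

lemma Uset_open (w : Fin n → Fin d → WithTop ℝ) (S : Set (Fin d × Fin n)) :
    IsOpen (Uset w S) := by
  have hrw : Uset w S = ⋂ i, ⋂ j, ⋂ k, {t : Fin d → ℝ |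
      (i,j) ∈ S → (k,j) ∉ S → (↑(t k - t i) + w j i : WithTop ℝ) < w j k} := by
    ext t; simp [Uset, Set.mem_iInter]
  rw [hrw]
  refine isOpen_iInter_of_finite fun i => isOpen_iInter_of_finite fun j =>
    isOpen_iInter_of_finite fun k => ?_
  by_cases hS1 : (i,j) ∈ S
  · by_cases hS2 : (k,j) ∈ S
    · convert isOpen_univ
      ext t; simp [hS1, hS2]
    · cases hwi : w j i with
      | top =>
        convert isOpen_empty
        ext t; simp [hS1, hS2, hwi]
      | coe e =>
        cases hwk : w j k with
        | top =>
          convert isOpen_univ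
          ext t; simp only [Set.mem_setOf_eq, Set.mem_univ, iff_true, hwi, hwk]
          intro _ _
          rw [← WithTop.coe_add]
          exact WithTop.coe_lt_top _
        | coe f =>
          have : {t : Fin d → ℝ | (i,j) ∈ S → (k,j) ∉ S →
              (↑(t k - t i) + (↑e : WithTop ℝ) : WithTop ℝ) < ↑f} = {t | t k - t i < f - e} := by
            ext t
            simp only [Set.mem_setOf_eq, ← WithTop.coe_add, WithTop.coe_lt_coe]
            constructor
            · intro h; linarith [h hS1 hS2]
            · intro h _ _; linarith
          rw [this]
          exact isOpen_lt ((continuous_apply k).sub (continuous_apply i)) continuous_const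
  · convert isOpen_univ
    ext t; simp [hS1]

def Mprop (w : Fin n → Fin d → WithTop ℝ) (S : Set (Fin d × Fin n)) (t : Fin d → ℝ) : Prop :=
  ∀ i i' j, (i,j) ∈ S → (i',j) ∈ S → (↑(t i' - t i) + w j i : WithTop ℝ) = w j i'

lemma cell_subset_M {w : Fin n → Fin d → WithTop ℝ} {S : Set (Fin d × Fin n)}
    {t : Fin d → ℝ} (h : t ∈ cell1C w S) : Mprop w S t := by
  intro i i' j h1 h2
  have c1 := h h1
  have c2 := h h2
  obtain ⟨e, he⟩ := WithTop.ne_top_iff_exists.mp c1.1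
  obtain ⟨e', he'⟩ := WithTop.ne_top_iff_exists.mp c2.1
  have i1 := c1.2 i'
  have i2 := c2.2 i
  rw [← he, ← he', ← WithTop.coe_add, WithTop.coe_le_coe] at i1
  rw [← he, ← he', ← WithTop.coe_add, WithTop.coe_le_coe] at i2
  rw [← he, ← he', ← WithTop.coe_add, WithTop.coe_eq_coe]
  linarith

lemma M_comb {w : Fin n → Fin d → WithTop ℝ} {S : Set (Fin d × Fin n)}
    (c : ℝ) {x y z : Fin d → ℝ} (hx : Mprop w S x) (hy : Mprop w S y) (hz : Mprop w S z) :
    Mprop w S (c • (x - y) + z) := by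
  intro i i' j h1 h2
  have hX := hx i i' j h1 h2
  have hY := hy i i' j h1 h2
  have hZ := hz i i' j h1 h2
  cases hwi : w j i with
  | top =>
    rw [hwi] at hX
    simp only [WithTop.add_top] at hX
    rw [← hX]
    simp
  | coe e =>
    rw [hwi] at hX hY hZ
    rw [← WithTop.coe_add] at hX hY hZ
    cases hwi' : w j i' with
    | top => rw [hwi'] at hX; exact absurd hX (by simp)
    | coe e' =>
      rw [hwi'] at hX hY hZ
      rw [WithTop.coe_eq_coe] at hX hY hZ
      rw [← WithTop.coe_add, WithTop.coe_eq_coe]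
      have hv : (c • (x - y) + z) i' - (c • (x - y) + z) i
          = c * ((x i' - x i) - (y i' - y i)) + (z i' - z i) := by
        simp [Pi.add_apply, Pi.smul_apply, Pi.sub_apply, smul_eq_mul]; ring
      rw [hv]
      have hA : x i' - x i = e' - e := by linarith
      have hB : y i' - y i = e' - e := by linarith
      have hC : z i' - z i = e' - e := by linarith
      rw [hA, hB, hC]; ring

lemma M_U_subset_cell {w : Fin n → Fin d → WithTop ℝ} {S : Set (Fin d × Fin n)}
    (hS : ∀ ij ∈ S, w ij.2 ij.1 ≠ ⊤) {t : Fin d → ℝ}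
    (hM : Mprop w S t) (hU : t ∈ Uset w S) : t ∈ cell1C w S := by
  rintro ⟨i,j⟩ hij
  refine ⟨hS _ hij, fun k => ?_⟩
  by_cases hk : (k,j) ∈ S
  · exact le_of_eq (hM i k j hij hk)
  · exact le_of_lt (hU i j k hij hk)

lemma cell_inter_U {w : Fin n → Fin d → WithTop ℝ} {S : Set (Fin d × Fin n)}
    {ts : Fin d → ℝ} (hS : S = covector1 w ts) :
    cell1C w S ∩ Uset w S = {t | covector1 w t = S} := by
  ext t
  constructor
  · rintro ⟨hc, hu⟩
    have hsub : S ⊆ covector1 w t := hc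
    refine Set.Subset.antisymm ?_ hsub
    rintro ⟨k, j⟩ hkj
    by_contra hkS
    have hwk := hkj.1
    obtain ⟨i, hi⟩ : ∃ i, (i, j) ∈ S := by
      rw [hS, covector1_eq_covG]
      exact covG_exists_col w ts hwk
    have hit : (i,j) ∈ covector1 w t := hsub hi
    rw [mem_covector1] at hit
    rw [mem_covector1] at hkj
    obtain ⟨e, he⟩ := WithTop.ne_top_iff_exists.mp hit.1
    obtain ⟨f, hf⟩ := WithTop.ne_top_iff_exists.mp hwk
    have h1 := hu i j k hi hkS
    have h2 := hkj.2 i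
    rw [← he, ← hf, ← WithTop.coe_add, WithTop.coe_lt_coe] at h1
    rw [← he, ← hf, ← WithTop.coe_add, WithTop.coe_le_coe] at h2
    linarith
  · intro ht
    have hteq : covector1 w t = S := ht
    constructor
    · intro ij hij; rw [← hteq] at hij; exact hij
    · intro i j k hij hkj
      rw [← hteq, mem_covector1] at hij
      obtain ⟨e, he⟩ := WithTop.ne_top_iff_exists.mp hij.1
      have hle := hij.2 k
      cases hwk : w j k with
      | top =>
        rw [← he, ← WithTop.coe_add]
        exact WithTop.coe_lt_top _
      | coe f =>
        rw [← he, hwk, ← WithTop.coe_add, WithTop.coe_le_coe] at hle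
        rw [← he, ← WithTop.coe_add, WithTop.coe_lt_coe]
        rcases lt_or_eq_of_le hle with h | h
        · exact h
        · exfalso
          apply hkj
          rw [← hteq]
          rw [mem_covector1]
          refine ⟨by rw [hwk]; exact WithTop.coe_ne_top, fun k' => ?_⟩
          have := hij.2 k'
          rw [← he] at this
          have harith : (↑(t k' - t k) + ↑f : WithTop ℝ) = ↑(t k' - t i) + ↑e := by
            rw [← WithTop.coe_add, ← WithTop.coe_add, WithTop.coe_eq_coe]
            linarith
          rw [hwk, harith]
          exact this

lemma seg_subset {w : Fin n → Fin d → WithTop ℝ} {S : Set (Fin d × Fin n)} :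
    ∀ q ∈ cell1C w S ∩ Uset w S, ∀ y ∈ cell1C w S,
      openSegment ℝ q y ⊆ cell1C w S ∩ Uset w S := by
  rintro q ⟨hqc, hqu⟩ y hyc x hx
  obtain ⟨a, b, ha, hb, hab, hx⟩ := hx
  constructor
  · rintro ⟨i,j⟩ hij
    have cq := hqc hij
    have cy := hyc hij
    rw [mem_covector1] at cq cy
    obtain ⟨e, he⟩ := WithTop.ne_top_iff_exists.mp cq.1
    rw [mem_covector1]
    refine ⟨cq.1, fun k => ?_⟩
    cases hwk : w j k with
    | top => exact le_top
    | coe f =>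
      have h1 := cq.2 k; have h2 := cy.2 k
      rw [← he, hwk, ← WithTop.coe_add, WithTop.coe_le_coe] at h1 h2
      rw [← he, ← WithTop.coe_add, WithTop.coe_le_coe]
      have hxv : x k - x i = a * (q k - q i) + b * (y k - y i) := by
        rw [← hx]; simp [Pi.add_apply, Pi.smul_apply, smul_eq_mul]; ring
      rw [hxv]
      have hE : a * e + b * e = e := by
        calc a * e + b * e = (a + b) * e := by ring
          _ = e := by rw [hab]; ring
      have hF : a * f + b * f = f := by
        calc a * f + b * f = (a + b) * f := by ring
          _ = f := by rw [hab]; ring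
      linarith [mul_le_mul_of_nonneg_left h1 ha.le, mul_le_mul_of_nonneg_left h2 hb.le]
  · intro i j k hij hkj
    have h1 := hqu i j k hij hkj
    have cq := hqc hij
    have cy := hyc hij
    rw [mem_covector1] at cq cy
    obtain ⟨e, he⟩ := WithTop.ne_top_iff_exists.mp cq.1
    cases hwk : w j k with
    | top =>
      rw [← he, ← WithTop.coe_add]
      exact WithTop.coe_lt_top _
    | coe f =>
      have h2 := cy.2 k
      rw [← he, hwk, ← WithTop.coe_add, WithTop.coe_lt_coe] at h1
      rw [← he, hwk, ← WithTop.coe_add, WithTop.coe_le_coe] at h2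
      rw [← he, ← WithTop.coe_add, WithTop.coe_lt_coe]
      have hxv : x k - x i = a * (q k - q i) + b * (y k - y i) := by
        rw [← hx]; simp [Pi.add_apply, Pi.smul_apply, smul_eq_mul]; ring
      rw [hxv]
      have hE : a * e + b * e = e := by
        calc a * e + b * e = (a + b) * e := by ring
          _ = e := by rw [hab]; ring
      have hF : a * f + b * f = f := by
        calc a * f + b * f = (a + b) * f := by ring
          _ = f := by rw [hab]; ring
      linarith [mul_lt_mul_of_pos_left h1 ha, mul_le_mul_of_nonneg_left h2 hb.le]

theorem relint_cell {w : Fin n → Fin d → WithTop ℝ} {S : Set (Fin d × Fin n)}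
    {ts : Fin d → ℝ} (hS : S = covector1 w ts) :
    intrinsicInterior ℝ (cell1C w S) = {t | covector1 w t = S} := by
  have hS' : ∀ ij ∈ S, w ij.2 ij.1 ≠ ⊤ := by
    rintro ⟨i,j⟩ hij; rw [hS] at hij; exact hij.1
  have hmain := lemL (cell1C w S) (Uset w S) (Uset_open w S)
    (by
      intro x hx hxU
      have hM : Mprop w S x := by
        refine affineSpan_induction hx (fun y hy => cell_subset_M hy) ?_
        intro c u vv ww hu hv hw
        have := M_comb (S := S) (w := w) c hu hv hw
        simpa [vsub_eq_sub, vadd_eq_add] using this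
      exact M_U_subset_cell hS' hM hxU)
    (by
      refine ⟨ts, ?_⟩
      rw [cell_inter_U hS]
      exact hS.symm)
    seg_subset
  rw [hmain, cell_inter_U hS]

-- CHUNK 4 : product blocks
theorem relint_block {d n : ℕ} {wA wB : Fin n → Fin d → WithTop ℝ}
    {SA SB : Set (Fin d × Fin n)} {ta tb : Fin d → ℝ}
    (hA : SA = covector1 wA ta) (hB : SB = covector1 wB tb) :
    intrinsicInterior ℝ {x : (Fin d → ℝ) × (Fin d → ℝ) |
        x.1 ∈ cell1C wA SA ∧ x.2 ∈ cell1C wB SB}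
      = {x | covector1 wA x.1 = SA ∧ covector1 wB x.2 = SB} := by
  set s : Set ((Fin d → ℝ) × (Fin d → ℝ)) :=
    {x | x.1 ∈ cell1C wA SA ∧ x.2 ∈ cell1C wB SB} with hs
  set U : Set ((Fin d → ℝ) × (Fin d → ℝ)) :=
    {x | x.1 ∈ Uset wA SA ∧ x.2 ∈ Uset wB SB} with hU
  have hS'A : ∀ ij ∈ SA, wA ij.2 ij.1 ≠ ⊤ := by
    rintro ⟨i,j⟩ hij; rw [hA] at hij; exact hij.1
  have hS'B : ∀ ij ∈ SB, wB ij.2 ij.1 ≠ ⊤ := by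
    rintro ⟨i,j⟩ hij; rw [hB] at hij; exact hij.1
  have hUo : IsOpen U := by
    have : U = (Uset wA SA) ×ˢ (Uset wB SB) := rfl
    rw [this]; exact (Uset_open _ _).prod (Uset_open _ _)
  have hiU : s ∩ U = {x | covector1 wA x.1 = SA ∧ covector1 wB x.2 = SB} := by
    ext x
    constructor
    · rintro ⟨⟨h1, h2⟩, ⟨h3, h4⟩⟩
      have hx1 : x.1 ∈ cell1C wA SA ∩ Uset wA SA := ⟨h1, h3⟩
      have hx2 : x.2 ∈ cell1C wB SB ∩ Uset wB SB := ⟨h2, h4⟩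
      rw [cell_inter_U hA] at hx1
      rw [cell_inter_U hB] at hx2
      exact ⟨hx1, hx2⟩
    · rintro ⟨h1, h2⟩
      have hx1 : x.1 ∈ cell1C wA SA ∩ Uset wA SA := by rw [cell_inter_U hA]; exact h1
      have hx2 : x.2 ∈ cell1C wB SB ∩ Uset wB SB := by rw [cell_inter_U hB]; exact h2
      exact ⟨⟨hx1.1, hx2.1⟩, ⟨hx1.2, hx2.2⟩⟩
  have hmain := lemL s U hUo
    (by
      intro x hx hxU
      have hM : Mprop wA SA x.1 ∧ Mprop wB SB x.2 := by
        refine affineSpan_induction (p := fun z => Mprop wA SA z.1 ∧ Mprop wB SB z.2) hx ?_ ?_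
        · rintro y ⟨hy1, hy2⟩
          exact ⟨cell_subset_M hy1, cell_subset_M hy2⟩
        · intro c u vv ww hu hv hw
          have e1 : (c • (u -ᵥ vv) +ᵥ ww).1 = c • (u.1 - vv.1) + ww.1 := rfl
          have e2 : (c • (u -ᵥ vv) +ᵥ ww).2 = c • (u.2 - vv.2) + ww.2 := rfl
          rw [e1, e2]
          exact ⟨M_comb c hu.1 hv.1 hw.1, M_comb c hu.2 hv.2 hw.2⟩
      exact ⟨M_U_subset_cell hS'A hM.1 hxU.1, M_U_subset_cell hS'B hM.2 hxU.2⟩)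
    (by
      refine ⟨(ta, tb), ?_⟩
      rw [hiU]
      exact ⟨hA.symm, hB.symm⟩)
    (by
      rintro q hq y hy x ⟨a, b, ha, hb, hab, hsum⟩
      have e1 : a • q.1 + b • y.1 = x.1 := congrArg Prod.fst hsum
      have e2 : a • q.2 + b • y.2 = x.2 := congrArg Prod.snd hsum
      have hx1 := seg_subset q.1 ⟨hq.1.1, hq.2.1⟩ y.1 hy.1 ⟨a, b, ha, hb, hab, e1⟩
      have hx2 := seg_subset q.2 ⟨hq.1.2, hq.2.2⟩ y.2 hy.2 ⟨a, b, ha, hb, hab, e2⟩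
      exact ⟨⟨hx1.1, hx2.1⟩, ⟨hx1.2, hx2.2⟩⟩)
  rw [hmain, hiU]

-- CHUNK 5 : lex bridge
section Bridge
variable {d n : ℕ}

lemma oa1 (x y : T2) : (ofLex (x+y)).1 = (ofLex x).1 + (ofLex y).1 := rfl
lemma oa2 (x y : T2) : (ofLex (x+y)).2 = (ofLex x).2 + (ofLex y).2 := rfl
lemma os1 (x y : T2) : (ofLex (x-y)).1 = (ofLex x).1 - (ofLex y).1 := rfl
lemma os2 (x y : T2) : (ofLex (x-y)).2 = (ofLex x).2 - (ofLex y).2 := rfl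

lemma T2_le_iff (x y : T2) : x ≤ y ↔
    ((ofLex x).1 < (ofLex y).1 ∨ ((ofLex x).1 = (ofLex y).1 ∧ (ofLex x).2 ≤ (ofLex y).2)) :=
  Prod.Lex.le_iff

lemma mem_covector {v : Fin n → Fin d → T2i} {p : Fin d → T2} {i : Fin d} {j : Fin n} :
    (i,j) ∈ covector v p ↔ v j i ≠ ⊤ ∧ ∀ k, (↑(p k - p i) + v j i : T2i) ≤ v j k :=
  Iff.rfl

lemma covector_eq_covG (v : Fin n → Fin d → T2i) (p : Fin d → T2) :
    covector v p = covG v p := rfl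

lemma genU_top {v : Fin n → Fin d → T2i} {j : Fin n} {i : Fin d} (h : v j i = ⊤) :
    genU v j i = ⊤ := by simp [genU, projU2, h]

lemma genU_coe {v : Fin n → Fin d → T2i} {j : Fin n} {i : Fin d} {e : T2} (h : v j i = ↑e) :
    genU v j i = ↑((ofLex e).1) := by simp [genU, projU2, h]

lemma genU_ne_top_iff {v : Fin n → Fin d → T2i} {j : Fin n} {i : Fin d} :
    genU v j i ≠ ⊤ ↔ v j i ≠ ⊤ := by
  rcases eq_or_ne (v j i) ⊤ with h | h
  · simp [genU_top h, h]
  · obtain ⟨e, he⟩ := WithTop.ne_top_iff_exists.mp h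
    simp [genU_coe he.symm, h]

lemma genTB_coe {v : Fin n → Fin d → T2i} {T : Set (Fin d × Fin n)} {j : Fin n} {i : Fin d}
    {e : T2} (hT : (i,j) ∈ T) (h : v j i = ↑e) :
    genTB v T j i = ↑((ofLex e).2) := by simp [genTB, genRestrict, projT2, hT, h]

lemma genTB_top_of_not_mem {v : Fin n → Fin d → T2i} {T : Set (Fin d × Fin n)} {j : Fin n}
    {i : Fin d} (hT : (i,j) ∉ T) : genTB v T j i = ⊤ := by
  simp [genTB, genRestrict, projT2, hT]

lemma genTB_ne_top {v : Fin n → Fin d → T2i} {T : Set (Fin d × Fin n)} {j : Fin n} {i : Fin d}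
    (h : genTB v T j i ≠ ⊤) : (i,j) ∈ T ∧ v j i ≠ ⊤ := by
  by_cases hT : (i,j) ∈ T
  · refine ⟨hT, ?_⟩
    intro htop
    apply h
    simp [genTB, genRestrict, projT2, hT, htop]
  · exact absurd (genTB_top_of_not_mem hT) h

/-- The covector of `p` is contained in the rank-one covector of its `u`-part. -/
lemma covT (v : Fin n → Fin d → T2i) (p : Fin d → T2) :
    covector v p ⊆ covector1 (genU v) (fun i => (ofLex (p i)).1) := by
  rintro ⟨i, j⟩ hij
  rw [mem_covector] at hij
  obtain ⟨e, he⟩ := WithTop.ne_top_iff_exists.mp hij.1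
  rw [mem_covector1]
  refine ⟨by rw [genU_coe he.symm]; exact WithTop.coe_ne_top, fun k => ?_⟩
  rcases eq_or_ne (v j k) ⊤ with hvk | hne
  · rw [genU_top hvk]; exact le_top
  · obtain ⟨f, hf0⟩ := WithTop.ne_top_iff_exists.mp hne
    have hvk := hf0.symm
    have := hij.2 k
    rw [← he, hvk, ← WithTop.coe_add, WithTop.coe_le_coe] at this
    rw [genU_coe he.symm, genU_coe hvk, ← WithTop.coe_add, WithTop.coe_le_coe]
    rcases (T2_le_iff _ _).mp this with h | h
    · rw [oa1, os1] at h; exact le_of_lt h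
    · rw [oa1, os1] at h; exact le_of_eq h.1

/-- Key bridge: the rank-two covector of `p` equals the rank-one covector of its
`t`-part w.r.t. the restricted generators. -/
lemma covB (v : Fin n → Fin d → T2i) (p : Fin d → T2) {T : Set (Fin d × Fin n)}
    (hT : T = covector1 (genU v) (fun i => (ofLex (p i)).1)) :
    covector1 (genTB v T) (fun i => (ofLex (p i)).2) = covector v p := by
  set u : Fin d → ℝ := fun i => (ofLex (p i)).1 with hu
  set t : Fin d → ℝ := fun i => (ofLex (p i)).2 with ht
  apply Set.Subset.antisymm
  · -- LHS ⊆ covector v p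
    rintro ⟨k, j⟩ hkj
    rw [mem_covector1] at hkj
    obtain ⟨hkT, hvk⟩ := genTB_ne_top hkj.1
    obtain ⟨f, hf⟩ := WithTop.ne_top_iff_exists.mp hvk
    have hkT' := hkT
    rw [hT, mem_covector1] at hkT'
    rw [mem_covector]
    refine ⟨hvk, fun k' => ?_⟩
    rcases eq_or_ne (v j k') ⊤ with hvk' | hne'
    · rw [hvk']; exact le_top
    · obtain ⟨g, hg0⟩ := WithTop.ne_top_iff_exists.mp hne'
      have hvk' := hg0.symm
      rw [hvk', ← hf, ← WithTop.coe_add, WithTop.coe_le_coe]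
      have hU := hkT'.2 k'
      rw [genU_coe hf.symm, genU_coe hvk', ← WithTop.coe_add, WithTop.coe_le_coe] at hU
      rcases lt_or_eq_of_le hU with hlt | heq
      · apply (T2_le_iff _ _).mpr
        left
        rw [oa1, os1]
        exact hlt
      · -- first coordinates tie: k' also lies in T
        have hk'T : (k', j) ∈ T := by
          rw [hT, mem_covector1]
          refine ⟨by rw [genU_coe hvk']; exact WithTop.coe_ne_top, fun k'' => ?_⟩
          rcases eq_or_ne (v j k'') ⊤ with hvk'' | hne''
          · rw [genU_top hvk'']; exact le_top
          · obtain ⟨g'', hg2⟩ := WithTop.ne_top_iff_exists.mp hne''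
            have hvk'' := hg2.symm
            have h3 := hkT'.2 k''
            rw [genU_coe hf.symm, genU_coe hvk'', ← WithTop.coe_add, WithTop.coe_le_coe] at h3
            rw [genU_coe hvk', genU_coe hvk'', ← WithTop.coe_add, WithTop.coe_le_coe]
            linarith
        have h4 := hkj.2 k'
        rw [genTB_coe hkT hf.symm, genTB_coe hk'T hvk', ← WithTop.coe_add,
          WithTop.coe_le_coe] at h4
        apply (T2_le_iff _ _).mpr
        right
        constructor
        · rw [oa1, os1]; exact heq
        · rw [oa2, os2]; exact h4
  · -- covector v p ⊆ LHS
    rintro ⟨i, j⟩ hij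
    have hiT : (i, j) ∈ T := by rw [hT]; exact covT v p hij
    rw [mem_covector] at hij
    obtain ⟨e, he⟩ := WithTop.ne_top_iff_exists.mp hij.1
    rw [mem_covector1]
    refine ⟨by rw [genTB_coe hiT he.symm]; exact WithTop.coe_ne_top, fun k => ?_⟩
    by_cases hkT : (k, j) ∈ T
    · have hvk : v j k ≠ ⊤ := by
        intro htop
        have := hkT
        rw [hT, mem_covector1] at this
        exact this.1 (genU_top htop)
      obtain ⟨f, hf⟩ := WithTop.ne_top_iff_exists.mp hvk
      rw [genTB_coe hiT he.symm, genTB_coe hkT hf.symm, ← WithTop.coe_add, WithTop.coe_le_coe]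
      -- first coordinates tie b/c both in T
      have hiT' := hiT; have hkT' := hkT
      rw [hT, mem_covector1] at hiT' hkT'
      have h1 := hiT'.2 k
      have h2 := hkT'.2 i
      rw [genU_coe he.symm, genU_coe hf.symm, ← WithTop.coe_add, WithTop.coe_le_coe] at h1
      rw [genU_coe hf.symm, genU_coe he.symm, ← WithTop.coe_add, WithTop.coe_le_coe] at h2
      have heq : u k - u i + (ofLex e).1 = (ofLex f).1 := by linarith
      have h5 := hij.2 k
      rw [← he, ← hf, ← WithTop.coe_add, WithTop.coe_le_coe] at h5
      rcases (T2_le_iff _ _).mp h5 with hlt | hle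
      · exfalso
        rw [oa1, os1] at hlt
        rw [hu] at heq
        simp only at hlt heq
        linarith
      · rw [oa2, os2] at hle
        exact hle.2
    · rw [genTB_top_of_not_mem hkT]
      exact le_top
end Bridge

-- CHUNK 6 : cone membership
lemma mem_genConeFin_iff {d n : ℕ} (v : Fin n → Fin d → T2i) (p : Fin d → T2) :
    p ∈ genConeFin v ↔ BoundedGraph (covector v p) := by
  constructor
  · rintro ⟨lam, hlam⟩
    intro i
    have h := (covG_iff_comb (G := T2) v p).mpr ⟨lam, fun i => congrFun hlam i⟩ i
    rw [covector_eq_covG]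
    exact h
  · intro hb
    have h : ∀ i, ∃ j, (i,j) ∈ covG v p := by
      intro i; rw [← covector_eq_covG]; exact hb i
    obtain ⟨lam, hlam⟩ := (covG_iff_comb (G := T2) v p).mp h
    exact ⟨lam, funext hlam⟩

-- CHUNK 7 : realization of S as a covector of the restricted configuration
lemma claimC {d n : ℕ} (v : Fin n → Fin d → T2i) {S T : Set (Fin d × Fin n)}
    (pS : Fin d → T2) (hS : S = covector v pS)
    (us : Fin d → ℝ) (hT : T = covector1 (genU v) us)
    (hST : S ⊆ T) :
    ∃ t' : Fin d → ℝ, covector1 (genTB v T) t' = S := by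
  classical
  set ub : Fin d → ℝ := fun i => (ofLex (pS i)).1 with hub
  set tb : Fin d → ℝ := fun i => (ofLex (pS i)).2 with htb
  set g : Fin d × Fin n × Fin d → ℝ := fun x =>
    if 0 < (ub x.1 - us x.1) - (ub x.2.2 - us x.2.2) then
      (tb x.2.2 - tb x.1 + WithTop.untopD 0 (projT2 (v x.2.1 x.1))
          - WithTop.untopD 0 (projT2 (v x.2.1 x.2.2)))
        / ((ub x.1 - us x.1) - (ub x.2.2 - us x.2.2))
    else 0 with hg
  obtain ⟨M, hM⟩ := (Set.finite_range g).bddAbove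
  set lam : ℝ := M + 1 with hlam
  have hglam : ∀ x, g x < lam := fun x =>
    lt_of_le_of_lt (hM (Set.mem_range_self x)) (lt_add_one M)
  set t' : Fin d → ℝ := fun i => tb i + lam * (ub i - us i) with ht'
  -- the master estimate
  have key : ∀ i j k, (i,j) ∈ S → (k,j) ∈ T → ∀ e f : T2, ↑e = v j i → ↑f = v j k →
      (t' k - t' i + (ofLex e).2 ≤ (ofLex f).2 ∧
        ((k,j) ∉ S → t' k - t' i + (ofLex e).2 < (ofLex f).2)) := by
    intro i j k hiS hkT e f he hf
    have hiC : (i,j) ∈ covector v pS := by rw [← hS]; exact hiS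
    have hiT : (i,j) ∈ T := hST hiS
    rw [hT, mem_covector1] at hiT hkT
    have h1 := hiT.2 k
    have h2 := hkT.2 i
    rw [genU_coe he.symm, genU_coe hf.symm, ← WithTop.coe_add, WithTop.coe_le_coe] at h1
    rw [genU_coe hf.symm, genU_coe he.symm, ← WithTop.coe_add, WithTop.coe_le_coe] at h2
    have hA : us k - us i + (ofLex e).1 = (ofLex f).1 := by linarith
    rw [mem_covector] at hiC
    have h5 := hiC.2 k
    rw [← he, ← hf, ← WithTop.coe_add, WithTop.coe_le_coe] at h5
    rcases (T2_le_iff _ _).mp h5 with hlt | hle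
    · -- first coordinate strict : large lambda pushes k out
      rw [oa1, os1] at hlt
      have hβ : 0 < (ub i - us i) - (ub k - us k) := by linarith
      have hgx : g (i, j, k) = (tb k - tb i + (ofLex e).2 - (ofLex f).2)
          / ((ub i - us i) - (ub k - us k)) := by
        rw [hg]
        simp only
        rw [if_pos hβ, ← he, ← hf]
        simp [projT2]
      have hglt := hglam (i, j, k)
      rw [hgx] at hglt
      have hmul : tb k - tb i + (ofLex e).2 - (ofLex f).2
          < lam * ((ub i - us i) - (ub k - us k)) := by
        rw [div_lt_iff₀ hβ] at hglt
        linarith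
      have hstrict : t' k - t' i + (ofLex e).2 < (ofLex f).2 := by
        rw [ht']
        simp only
        linarith [hmul]
      exact ⟨le_of_lt hstrict, fun _ => hstrict⟩
    · -- first coordinates tie
      rw [oa1, os1] at hle
      obtain ⟨heq1, hle2⟩ := hle
      rw [oa2, os2] at hle2
      have hcoef : ub k - ub i = us k - us i := by linarith
      have hdiff : t' k - t' i = tb k - tb i := by
        rw [ht']; simp only; linear_combination lam * hcoef
      constructor
      · rw [hdiff]; linarith
      · intro hkS
        rw [hdiff]
        rcases lt_or_eq_of_le hle2 with h | h
        · linarith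
        · exfalso
          apply hkS
          rw [hS, mem_covector]
          have hfeq : f = pS k - pS i + e := by
            apply ofLex.injective
            apply Prod.ext
            · rw [oa1, os1]; linarith
            · rw [oa2, os2]; linarith
          refine ⟨by rw [← hf]; exact WithTop.coe_ne_top, fun k' => ?_⟩
          have h6 := hiC.2 k'
          rw [← hf, hfeq]
          have harr : (↑(pS k' - pS k) + ↑(pS k - pS i + e) : T2i)
              = ↑(pS k' - pS i) + ↑e := by
            rw [← WithTop.coe_add, ← WithTop.coe_add, WithTop.coe_eq_coe]
            abel
          rw [harr, he]
          exact h6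
  -- S ⊆ covector1 w t'
  have hsubset : S ⊆ covector1 (genTB v T) t' := by
    rintro ⟨i, j⟩ hiS
    have hiC : (i,j) ∈ covector v pS := by rw [← hS]; exact hiS
    rw [mem_covector] at hiC
    obtain ⟨e, he⟩ := WithTop.ne_top_iff_exists.mp hiC.1
    rw [mem_covector1]
    refine ⟨by rw [genTB_coe (hST hiS) he.symm]; exact WithTop.coe_ne_top, fun k => ?_⟩
    by_cases hkT : (k, j) ∈ T
    · have hvk : v j k ≠ ⊤ := by
        intro htop
        have := hkT
        rw [hT, mem_covector1] at this
        exact this.1 (genU_top htop)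
      obtain ⟨f, hf⟩ := WithTop.ne_top_iff_exists.mp hvk
      rw [genTB_coe (hST hiS) he.symm, genTB_coe hkT hf.symm, ← WithTop.coe_add,
        WithTop.coe_le_coe]
      exact (key i j k hiS hkT e f he hf).1
    · rw [genTB_top_of_not_mem hkT]
      exact le_top
  refine ⟨t', Set.Subset.antisymm ?_ hsubset⟩
  rintro ⟨k, j⟩ hkj
  rw [mem_covector1] at hkj
  obtain ⟨hkT, hvk⟩ := genTB_ne_top hkj.1
  obtain ⟨f, hf⟩ := WithTop.ne_top_iff_exists.mp hvk
  obtain ⟨i, hiS⟩ : ∃ i, (i,j) ∈ S := by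
    rw [hS, covector_eq_covG]
    exact covG_exists_col v pS hvk
  by_contra hkS
  have hiC : (i,j) ∈ covector v pS := by rw [← hS]; exact hiS
  rw [mem_covector] at hiC
  obtain ⟨e, he⟩ := WithTop.ne_top_iff_exists.mp hiC.1
  have hstrict := (key i j k hiS hkT e f he hf).2 hkS
  have h2 := hkj.2 i
  rw [genTB_coe hkT hf.symm, genTB_coe (hST hiS) he.symm, ← WithTop.coe_add,
    WithTop.coe_le_coe] at h2
  linarith

theorem cone_decomposition (d n : ℕ) (v : Fin n → Fin d → T2i) :
    embed2 '' genConeFin v =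
      ⋃ S : Set (Fin d × Fin n), ⋃ T : Set (Fin d × Fin n),
        ⋃ (_ : coneIdx v S T), conePiece v S T ∧
    (∀ S T S' T' : Set (Fin d × Fin n), coneIdx v S T → coneIdx v S' T' →
      (S ≠ S' ∨ T ≠ T') → Disjoint (conePiece v S T) (conePiece v S' T')) ∧
    (∀ S T : Set (Fin d × Fin n), coneIdx v S T →
      conePiece v S T = intrinsicInterior ℝ (coneBlock v S T)) := by
  refine ⟨?_, ?_, ?_⟩
  · -- the decomposition
    ext x
    simp only [Set.mem_iUnion, Set.mem_image]
    constructor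
    · rintro ⟨p, hp, rfl⟩
      refine ⟨covector v p, covector1 (genU v) (fun i => (ofLex (p i)).1),
        ⟨⟨p, rfl⟩, (mem_genConeFin_iff v p).mp hp, ⟨fun i => (ofLex (p i)).1, rfl⟩,
          covT v p⟩, ?_, ?_⟩
      · show (fun i => (ofLex (p i)).1) ∈ _
        rw [relint_cell (rfl :
          covector1 (genU v) (fun i => (ofLex (p i)).1)
            = covector1 (genU v) (fun i => (ofLex (p i)).1))]
        exact rfl
      · show (fun i => (ofLex (p i)).2) ∈ _
        rw [relint_cell ((covB v p rfl).symm :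
          covector v p = covector1 _ (fun i => (ofLex (p i)).2))]
        exact covB v p rfl
    · rintro ⟨S, T, hidx, hx1, hx2⟩
      obtain ⟨⟨pS, hpS⟩, hbdd, ⟨us, hus⟩, hST⟩ := hidx
      obtain ⟨ts, hts⟩ := claimC v pS hpS us hus hST
      rw [relint_cell hus] at hx1
      rw [relint_cell (hts.symm : S = covector1 (genTB v T) ts)] at hx2
      set p : Fin d → T2 := fun i => toLex (x.1 i, x.2 i) with hpdef
      have hpu : (fun i => (ofLex (p i)).1) = x.1 := rfl
      have hpt : (fun i => (ofLex (p i)).2) = x.2 := rfl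
      have hcov : covector v p = S := by
        have h' := covB v p (T := covector1 (genU v) (fun i => (ofLex (p i)).1)) rfl
        rw [hpu, hpt] at h'
        rw [hx1] at h'
        rw [← h', hx2]
      refine ⟨p, ?_, ?_⟩
      · exact (mem_genConeFin_iff v p).mpr (by rw [hcov]; exact hbdd)
      · show ((fun i => (ofLex (p i)).1), (fun i => (ofLex (p i)).2)) = x
        rw [hpu, hpt]
  · -- disjointness
    intro S T S' T' h h' hne
    rw [Set.disjoint_left]
    intro x hx hx'
    obtain ⟨⟨pS, hpS⟩, hbdd, ⟨us, hus⟩, hST⟩ := h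
    obtain ⟨⟨pS', hpS'⟩, hbdd', ⟨us', hus'⟩, hST'⟩ := h'
    obtain ⟨ts, hts⟩ := claimC v pS hpS us hus hST
    obtain ⟨ts', hts'⟩ := claimC v pS' hpS' us' hus' hST'
    obtain ⟨hx1, hx2⟩ := hx
    obtain ⟨hx1', hx2'⟩ := hx'
    rw [relint_cell hus] at hx1
    rw [relint_cell hus'] at hx1'
    rw [relint_cell (hts.symm : S = covector1 (genTB v T) ts)] at hx2
    rw [relint_cell (hts'.symm : S' = covector1 (genTB v T') ts')] at hx2'
    have hTT : T = T' := by rw [← hx1, ← hx1']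
    have hSS : S = S' := by
      rw [← hx2, ← hx2', hTT]
    rcases hne with hne | hne
    · exact hne hSS
    · exact hne hTT
  · -- blocks
    intro S T h
    obtain ⟨⟨pS, hpS⟩, hbdd, ⟨us, hus⟩, hST⟩ := h
    obtain ⟨ts, hts⟩ := claimC v pS hpS us hus hST
    have h3 := relint_block (hA := hus) (hB := (hts.symm : S = covector1 (genTB v T) ts))
    ext x
    show (x.1 ∈ intrinsicInterior ℝ (cell1C (genU v) T)
        ∧ x.2 ∈ intrinsicInterior ℝ (cell1C (genTB v T) S))
      ↔ x ∈ intrinsicInterior ℝ (coneBlock v S T)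
    rw [relint_cell hus, relint_cell (hts.symm : S = covector1 (genTB v T) ts)]
    rw [show coneBlock v S T = {y : (Fin d → ℝ) × (Fin d → ℝ) |
        y.1 ∈ cell1C (genU v) T ∧ y.2 ∈ cell1C (genTB v T) S} from rfl, h3]
    exact Iff.rfl
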